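/- Let p be a prime and X an extraspecial group of order p^3 with center Z. If T₀ is an elementary abelian p-subgroup of rank 2 of a group P containing X, with T₀ normalizing X and normalizing every subgroup of index p of X that contains Z, then T₀ acts on X by inner automorphisms. -/

import Mathlib

section Aux

variable {G : Type*} [Group G]

/-- In a noncyclic group of order `p ^ 2`, every element has order dividing `p`. -/
lemma aux_pow_p_eq_one {p : ℕ} (hp : p.Prime) [Finite G]
    (hcard : Nat.card G = p ^ 2) (hnc : ¬ IsCyclic G) (g : G) : g ^ p = 1 := by
  have hd := orderOf_dvd_natCard g
  rw [hcard] at hd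
  obtain ⟨i, hi, he⟩ := (Nat.dvd_prime_pow hp).mp hd
  have hi2 : i ≠ 2 := by
    rintro rfl
    exact hnc (isCyclic_of_orderOf_eq_card g (by rw [he, hcard]))
  apply orderOf_dvd_iff_pow_eq_one.mp
  rw [he]
  exact (pow_dvd_pow p (by omega : i ≤ 1)).trans (by rw [pow_one])

/-- Conjugation relation iterated over integer powers. -/
lemma aux_conj_zpow {u v c : G} (hrel : u * v * u⁻¹ = c * v)
    (hcu : Commute c u) (k : ℤ) : u ^ k * v * (u ^ k)⁻¹ = c ^ k * v := by
  induction k using Int.induction_on with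
  | zero => simp
  | succ j ih =>
    have e : u ^ ((j : ℤ) + 1) * v * (u ^ ((j : ℤ) + 1))⁻¹
        = u * (u ^ (j : ℤ) * v * (u ^ (j : ℤ))⁻¹) * u⁻¹ := by
      rw [zpow_add_one]; group
    rw [e, ih]
    calc u * (c ^ (j : ℤ) * v) * u⁻¹
        = c ^ (j : ℤ) * (u * v * u⁻¹) := by
          simp only [← mul_assoc]
          rw [← (hcu.zpow_left (j : ℤ)).eq]
      _ = c ^ (j : ℤ) * (c * v) := by rw [hrel]
      _ = c ^ ((j : ℤ) + 1) * v := by rw [zpow_add_one]; simp only [mul_assoc]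
  | pred j ih =>
    have hrel' : u⁻¹ * v * u = c⁻¹ * v := by
      have h2 : u⁻¹ * (u * v * u⁻¹) * u = v := by group
      rw [hrel] at h2
      have h3 : c * (u⁻¹ * v * u) = v := by
        calc c * (u⁻¹ * v * u) = c * u⁻¹ * v * u := by simp only [mul_assoc]
          _ = u⁻¹ * c * v * u := by rw [hcu.inv_right.eq]
          _ = u⁻¹ * (c * v) * u := by simp only [mul_assoc]
          _ = v := h2
      have h4 : c⁻¹ * (c * (u⁻¹ * v * u)) = c⁻¹ * v := by rw [h3]
      rw [← mul_assoc, inv_mul_cancel, one_mul] at h4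
      exact h4
    have e : u ^ (-(j : ℤ) - 1) * v * (u ^ (-(j : ℤ) - 1))⁻¹
        = u⁻¹ * (u ^ (-(j : ℤ)) * v * (u ^ (-(j : ℤ)))⁻¹) * u := by
      rw [zpow_sub_one]; group
    rw [e, ih]
    calc u⁻¹ * (c ^ (-(j : ℤ)) * v) * u
        = c ^ (-(j : ℤ)) * (u⁻¹ * v * u) := by
          simp only [← mul_assoc]
          rw [((hcu.zpow_left (-(j : ℤ))).inv_right.eq).symm]
      _ = c ^ (-(j : ℤ)) * (c⁻¹ * v) := by rw [hrel']
      _ = c ^ (-(j : ℤ) - 1) * v := by rw [zpow_sub_one]; simp only [mul_assoc]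

end Aux

/-- Let `X` be an extraspecial subgroup of order `p^3` of a group `P`, with
centre `Z` (of order `p`). If `T₀` is an elementary abelian subgroup of rank `2` of `P`
normalising `X` and normalising every subgroup of index `p` of `X` containing `Z`, then
`T₀` acts on `X` by inner automorphisms. -/
theorem elemAb_normalizing_acts_by_inner {p : ℕ} (hp : p.Prime)
    (P : Type*) [Group P] [Finite P]
    (X : Subgroup P) (hXcard : Nat.card X = p ^ 3)
    (Z : Subgroup P) (hZ : Z = Subgroup.map X.subtype (Subgroup.center X))
    (hZcard : Nat.card Z = p)
    (T₀ : Subgroup P)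
    (hT₀ : Nonempty (T₀ ≃* (Multiplicative (ZMod p) × Multiplicative (ZMod p))))
    (hT₀X : T₀ ≤ Subgroup.normalizer (X : Set P))
    (hT₀Y : ∀ Y : Subgroup P, Y ≤ X → Z ≤ Y → Nat.card Y * p = Nat.card X →
      T₀ ≤ Subgroup.normalizer (Y : Set P)) :
    ∀ t ∈ T₀, ∃ y ∈ X, ∀ x ∈ X, t * x * t⁻¹ = y * x * y⁻¹ := by
  have hfp : Fact p.Prime := ⟨hp⟩
  intro t ht
  -- t ^ p = 1
  have htp : t ^ p = 1 := by
    obtain ⟨e⟩ := hT₀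
    have hmz : ∀ u : Multiplicative (ZMod p), u ^ p = 1 := by
      intro u
      rw [← ofAdd_toAdd u, ← ofAdd_nsmul]
      have : p • Multiplicative.toAdd u = 0 := by
        rw [nsmul_eq_mul, ZMod.natCast_self, zero_mul]
      rw [this]; rfl
    have h1 : (⟨t, ht⟩ : T₀) ^ p = 1 := by
      apply e.injective
      rw [map_pow, map_one]
      exact Prod.ext (hmz _) (hmz _)
    have := congrArg (fun g : T₀ => (g : P)) h1
    simpa using this
  -- Z ≤ X and commutation
  have hZle : Z ≤ X := by rw [hZ]; exact Subgroup.map_subtype_le _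
  have hZcomm : ∀ z ∈ Z, ∀ x ∈ X, z * x = x * z := by
    intro z hz x hx
    rw [hZ] at hz
    obtain ⟨w, hw, rfl⟩ := hz
    exact (congrArg Subtype.val (Subgroup.mem_center_iff.mp hw ⟨x, hx⟩)).symm
  -- center of X has card p
  have hcenter_card : Nat.card (Subgroup.center X) = p := by
    rw [← hZcard, hZ]
    exact Nat.card_congr
      (Subgroup.equivMapOfInjective (Subgroup.center X) X.subtype X.subtype_injective).toEquiv
  have hp3 : p ^ 3 ≠ p := by
    intro h
    have h2 := hp.two_le
    have h3 : p ^ 3 = p ^ 1 := by rwa [pow_one]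
    have h4 := Nat.pow_right_injective h2 h3
    omega
  -- X is nonabelian
  have hXne : ∃ a b : X, a * b ≠ b * a := by
    by_contra hcon
    push_neg at hcon
    have hcen : Subgroup.center X = ⊤ := by
      rw [Subgroup.eq_top_iff']
      intro g; exact Subgroup.mem_center_iff.mpr fun h => hcon h g
    have h6 := hcenter_card
    rw [hcen, Subgroup.card_top, hXcard] at h6
    exact hp3 h6
  -- the quotient by the center
  have hQcard : Nat.card (X ⧸ Subgroup.center X) = p ^ 2 := by
    have h := Subgroup.card_eq_card_quotient_mul_card_subgroup (Subgroup.center X)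
    rw [hXcard, hcenter_card] at h
    apply Nat.eq_of_mul_eq_mul_right hp.pos
    rw [← h]; ring
  have hQnc : ¬ IsCyclic (X ⧸ Subgroup.center X) := by
    intro hcyc
    obtain ⟨a, b, hab⟩ := hXne
    exact hab (commutative_of_cyclic_center_quotient (QuotientGroup.mk' (Subgroup.center X))
      (QuotientGroup.ker_mk' _).le a b)
  -- p-th powers land in Z
  have hxpZ : ∀ x ∈ X, x ^ p ∈ Z := by
    intro x hx
    have hmem : (⟨x, hx⟩ : X) ^ p ∈ Subgroup.center X := by
      rw [← QuotientGroup.eq_one_iff]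
      have h7 : ((((⟨x, hx⟩ : X) ^ p : X)) : X ⧸ Subgroup.center X)
          = (((⟨x, hx⟩ : X) : X ⧸ Subgroup.center X)) ^ p := rfl
      rw [h7]
      exact aux_pow_p_eq_one hp hQcard hQnc _
    rw [hZ]
    exact ⟨_, hmem, by simp⟩
  -- conjugation by t preserves X
  have htmem : ∀ x ∈ X, t * x * t⁻¹ ∈ X :=
    fun x hx => (Subgroup.mem_normalizer_iff.mp (hT₀X ht) x).mp hx
  have htmem' : ∀ x ∈ X, t⁻¹ * x * t ∈ X := by
    intro x hx
    have h8 := (Subgroup.mem_normalizer_iff.mp (hT₀X (T₀.inv_mem ht)) x).mp hx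
    rwa [inv_inv] at h8
  -- conjugation by t preserves Z (setwise)
  have htZmem : ∀ z ∈ Z, t * z * t⁻¹ ∈ Z := by
    intro z hz
    rw [hZ] at hz ⊢
    obtain ⟨w, hw, rfl⟩ := hz
    have hwX : (X.subtype w : P) ∈ X := w.2
    refine ⟨⟨t * X.subtype w * t⁻¹, htmem _ hwX⟩, Subgroup.mem_center_iff.mpr ?_, rfl⟩
    intro g
    apply Subtype.ext
    show (g : P) * (t * X.subtype w * t⁻¹) = (t * X.subtype w * t⁻¹) * g
    have h1 : t⁻¹ * (g : P) * t ∈ X := htmem' _ g.2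
    have h2 : (X.subtype w : P) * (t⁻¹ * g * t) = (t⁻¹ * g * t) * X.subtype w :=
      (congrArg Subtype.val (Subgroup.mem_center_iff.mp hw ⟨_, h1⟩)).symm
    calc (g : P) * (t * X.subtype w * t⁻¹)
        = t * ((t⁻¹ * g * t) * X.subtype w) * t⁻¹ := by group
      _ = t * (X.subtype w * (t⁻¹ * g * t)) * t⁻¹ := by rw [← h2]
      _ = (t * X.subtype w * t⁻¹) * g := by group
  -- conjugation by t fixes Z pointwise
  have htZ : ∀ z ∈ Z, t * z * t⁻¹ = z := by
    intro z hz
    rcases eq_or_ne z 1 with rfl | h1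
    · simp
    · have hzZ : (⟨z, hz⟩ : Z) ≠ 1 := by
        simp only [ne_eq, Subgroup.mk_eq_one]; exact h1
      have ho : orderOf (⟨z, hz⟩ : Z) = p := by
        have hd := orderOf_dvd_natCard (⟨z, hz⟩ : Z)
        rw [hZcard] at hd
        rcases hp.eq_one_or_self_of_dvd _ hd with h | h
        · exact absurd (orderOf_eq_one_iff.mp h) hzZ
        · exact h
      have hgen : Subgroup.zpowers (⟨z, hz⟩ : Z) = ⊤ := by
        apply Subgroup.eq_top_of_card_eq
        rw [Nat.card_zpowers, ho, hZcard]
      obtain ⟨k, hk⟩ : ∃ k : ℤ, (⟨z, hz⟩ : Z) ^ k = ⟨t * z * t⁻¹, htZmem z hz⟩ :=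
        Subgroup.mem_zpowers_iff.mp (by rw [hgen]; trivial)
      have hk' : t * z * t⁻¹ = z ^ k := by
        have h9 := congrArg (fun g : Z => (g : P)) hk
        simpa using h9.symm
      have hiter : ∀ j : ℕ, t ^ j * z * (t ^ j)⁻¹ = z ^ (k ^ j) := by
        intro j
        induction j with
        | zero => simp
        | succ n ih =>
          have e0 : t ^ (n + 1) * z * (t ^ (n + 1))⁻¹ = t * (t ^ n * z * (t ^ n)⁻¹) * t⁻¹ := by
            group
          rw [e0, ih, ← conj_zpow, hk', ← zpow_mul, ← pow_succ']
      have hfin := hiter p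
      rw [htp, one_mul, inv_one, mul_one] at hfin
      have hozP : orderOf z = p := by
        rw [← Subgroup.orderOf_mk z hz, ho]
      have hz1 : z ^ (k ^ p - 1) = 1 := by
        rw [zpow_sub, zpow_one, ← hfin, mul_inv_cancel]
      have hdvd1 : (p : ℤ) ∣ k ^ p - 1 := by
        have h10 := orderOf_dvd_iff_zpow_eq_one.mpr hz1
        rwa [hozP] at h10
      have hdvd2 : (p : ℤ) ∣ k ^ p - k := by
        have h2 := ZMod.pow_card (k : ZMod p)
        have h3 : ((k ^ p - k : ℤ) : ZMod p) = 0 := by push_cast; rw [h2]; ring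
        exact (ZMod.intCast_zmod_eq_zero_iff_dvd _ _).mp h3
      obtain ⟨m, hm⟩ : (p : ℤ) ∣ k - 1 := by
        have h4 : k - 1 = (k ^ p - 1) - (k ^ p - k) := by ring
        rw [h4]; exact dvd_sub hdvd1 hdvd2
      have hzk : z ^ k = z := by
        have h5 : k = 1 + (p : ℤ) * m := by linarith
        rw [h5, zpow_add, zpow_one, zpow_mul, zpow_natCast]
        rw [show z ^ p = 1 from by rw [← hozP]; exact pow_orderOf_eq_one z]
        simp
      rw [hk', hzk]
  -- Key step: conjugation by t is "central": t x t⁻¹ ∈ Z x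
  have hkey : ∀ x ∈ X, ∃ ζ ∈ Z, t * x * t⁻¹ = ζ * x := by
    intro x hx
    by_cases hxZ : x ∈ Z
    · exact ⟨1, Z.one_mem, by rw [htZ x hxZ, one_mul]⟩
    · -- the subgroup Z⟨x⟩
      have hxcC : ∀ z ∈ Z, ∀ n : ℤ, Commute z (x ^ n) :=
        fun z hz n => hZcomm z hz _ (X.zpow_mem hx n)
      let Y : Subgroup P :=
        { carrier := {g | ∃ z ∈ Z, ∃ n : ℤ, g = z * x ^ n}
          one_mem' := ⟨1, Z.one_mem, 0, by simp⟩
          mul_mem' := by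
            rintro a b ⟨z1, hz1, n1, rfl⟩ ⟨z2, hz2, n2, rfl⟩
            refine ⟨z1 * z2, Z.mul_mem hz1 hz2, n1 + n2, ?_⟩
            rw [zpow_add]
            simp only [mul_assoc]
            rw [← mul_assoc (x ^ n1) z2, ← (hxcC z2 hz2 n1).eq, mul_assoc]
          inv_mem' := by
            rintro a ⟨z1, hz1, n1, rfl⟩
            refine ⟨z1⁻¹, Z.inv_mem hz1, -n1, ?_⟩
            rw [mul_inv_rev, zpow_neg]
            exact ((hxcC z1 hz1 n1).inv_inv).symm.eq }
      have hmemY : ∀ g, g ∈ Y ↔ ∃ z ∈ Z, ∃ n : ℤ, g = z * x ^ n := fun g => Iff.rfl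
      have hYX : Y ≤ X := by
        rintro g ⟨z, hz, n, rfl⟩
        exact X.mul_mem (hZle hz) (X.zpow_mem hx n)
      have hZY : Z ≤ Y := fun z hz => ⟨z, hz, 0, by simp⟩
      have hxY : x ∈ Y := ⟨1, Z.one_mem, 1, by simp⟩
      have hYne : Y ≠ X := by
        intro hYX'
        obtain ⟨a, b, hab⟩ := hXne
        apply hab
        apply Subtype.ext
        have haY : (a : P) ∈ Y := by rw [hYX']; exact a.2
        have hbY : (b : P) ∈ Y := by rw [hYX']; exact b.2
        obtain ⟨z1, hz1, n1, e1⟩ := haY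
        obtain ⟨z2, hz2, n2, e2⟩ := hbY
        show (a : P) * b = (b : P) * a
        rw [e1, e2]
        have c1 : Commute z1 z2 := hZcomm z1 hz1 z2 (hZle hz2)
        have c4 : Commute (x ^ n1) (x ^ n2) := (Commute.refl x).zpow_zpow n1 n2
        exact ((c1.mul_right (hxcC z1 hz1 n2)).mul_left
          ((hxcC z2 hz2 n1).symm.mul_right c4))
      have hYcard : Nat.card Y * p = Nat.card X := by
        have hd : Nat.card Y ∣ p ^ 3 := hXcard ▸ Subgroup.card_dvd_of_le hYX
        obtain ⟨i, hi3, hYc⟩ := (Nat.dvd_prime_pow hp).mp hd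
        have hpd : p ∣ Nat.card Y := hZcard ▸ Subgroup.card_dvd_of_le hZY
        have hi0 : i ≠ 0 := by
          rintro rfl
          rw [pow_zero] at hYc
          rw [hYc] at hpd
          exact hp.one_lt.ne' (Nat.dvd_one.mp hpd)
        have hi1 : i ≠ 1 := by
          rintro rfl
          rw [pow_one] at hYc
          have : Z = Y := Subgroup.eq_of_le_of_card_ge hZY (by rw [hYc, hZcard])
          exact hxZ (this ▸ hxY)
        have hi3' : i ≠ 3 := by
          rintro rfl
          exact hYne (Subgroup.eq_of_le_of_card_ge hYX (by rw [hYc, hXcard]))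
        have : i = 2 := by omega
        rw [hYc, this, hXcard]; ring
      have htY : t * x * t⁻¹ ∈ Y :=
        (Subgroup.mem_normalizer_iff.mp (hT₀Y Y hYX hZY hYcard ht) x).mp hxY
      obtain ⟨z, hz, n, hconj⟩ := htY
      -- iterate conjugation
      have hiter : ∀ j : ℕ, ∃ w ∈ Z, t ^ j * x * (t ^ j)⁻¹ = w * x ^ (n ^ j) := by
        intro j
        induction j with
        | zero => exact ⟨1, Z.one_mem, by simp⟩
        | succ j ih =>
          obtain ⟨w, hw, hj⟩ := ih
          refine ⟨w * z ^ (n ^ j), Z.mul_mem hw (Z.zpow_mem hz _), ?_⟩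
          have e0 : t ^ (j + 1) * x * (t ^ (j + 1))⁻¹ = t * (t ^ j * x * (t ^ j)⁻¹) * t⁻¹ := by
            group
          have e1 : t * (w * x ^ n ^ j) * t⁻¹ = (t * w * t⁻¹) * (t * x ^ n ^ j * t⁻¹) := by
            group
          rw [e0, hj, e1, htZ w hw, ← conj_zpow, hconj, (hxcC z hz n).mul_zpow,
            ← zpow_mul, ← pow_succ']
          simp only [mul_assoc]
      obtain ⟨w, hw, hfin⟩ := hiter p
      rw [htp, one_mul, inv_one, mul_one] at hfin
      have hww : x ^ ((1 : ℤ) - n ^ p) = w := by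
        have h6 : w * x ^ ((n : ℤ) ^ p) * (x ^ ((n : ℤ) ^ p))⁻¹ = w := by group
        rw [← hfin] at h6
        rw [← h6, zpow_sub, zpow_one]
      have h5 : x ^ ((1 : ℤ) - n ^ p) ∈ Z := hww ▸ hw
      have hdvd2 : (p : ℤ) ∣ n ^ p - n := by
        have h2 := ZMod.pow_card (n : ZMod p)
        have h3 : ((n ^ p - n : ℤ) : ZMod p) = 0 := by push_cast; rw [h2]; ring
        exact (ZMod.intCast_zmod_eq_zero_iff_dvd _ _).mp h3
      obtain ⟨m, hm⟩ := hdvd2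
      have hxn1 : x ^ (n - 1) ∈ Z := by
        have hA : x ^ ((n : ℤ) ^ p - 1) ∈ Z := by
          have hEq : x ^ ((n : ℤ) ^ p - 1) = (x ^ ((1 : ℤ) - n ^ p))⁻¹ := by
            rw [← zpow_neg]; congr 1; ring
          rw [hEq]; exact Z.inv_mem h5
        have hB : x ^ ((p : ℤ) * m) ∈ Z := by
          rw [zpow_mul, zpow_natCast]
          exact Z.zpow_mem (hxpZ x hx) m
        have hEq : (n : ℤ) - 1 = (n ^ p - 1) - p * m := by rw [← hm]; ring
        rw [hEq, zpow_sub]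
        exact Z.mul_mem hA (Z.inv_mem hB)
      refine ⟨z * x ^ (n - 1), Z.mul_mem hz hxn1, ?_⟩
      rw [hconj, mul_assoc]
      congr 1
      rw [← zpow_add_one, sub_add_cancel]
  -- choose noncommuting generators
  obtain ⟨a, b, hab⟩ := hXne
  set x₁ : P := (a : P) with hx₁def
  set x₂ : P := (b : P) with hx₂def
  have hx₁ : x₁ ∈ X := a.2
  have hx₂ : x₂ ∈ X := b.2
  set c : P := x₁ * x₂ * x₁⁻¹ * x₂⁻¹ with hcdef
  have hc1 : c ≠ 1 := by
    intro h
    have h4 := mul_inv_eq_one.mp h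
    have h5 := mul_inv_eq_iff_eq_mul.mp h4
    exact hab (Subtype.ext h5)
  have hcZmem : c ∈ Z := by
    have hcomm := IsPGroup.commutative_of_card_eq_prime_sq (p := p) hQcard
    have hmemc : a * b * a⁻¹ * b⁻¹ ∈ Subgroup.center X := by
      rw [← QuotientGroup.eq_one_iff]
      have h7 : ((a * b * a⁻¹ * b⁻¹ : X) : X ⧸ Subgroup.center X)
          = ((a : X ⧸ Subgroup.center X) * b) * (a : X ⧸ Subgroup.center X)⁻¹
            * (b : X ⧸ Subgroup.center X)⁻¹ := rfl
      rw [h7, hcomm (a : X ⧸ Subgroup.center X) (b : X ⧸ Subgroup.center X)]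
      group
    rw [hZ]
    exact ⟨_, hmemc, rfl⟩
  have hccX : ∀ g ∈ X, Commute c g := fun g hg => hZcomm c hcZmem g hg
  -- Z is generated by c
  have hzpc : Subgroup.zpowers c ≤ Z := Subgroup.zpowers_le.mpr hcZmem
  have hZc : Z = Subgroup.zpowers c := by
    have h7 : Nat.card (Subgroup.zpowers c) ∣ p := hZcard ▸ Subgroup.card_dvd_of_le hzpc
    rcases hp.eq_one_or_self_of_dvd _ h7 with h | h
    · rw [Nat.card_zpowers] at h
      exact absurd (orderOf_eq_one_iff.mp h) hc1
    · exact (Subgroup.eq_of_le_of_card_ge hzpc (by rw [h, hZcard])).symm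
  have hZgen : ∀ ζ ∈ Z, ∃ k : ℤ, c ^ k = ζ := by
    intro ζ hζ
    rw [hZc] at hζ
    exact Subgroup.mem_zpowers_iff.mp hζ
  -- commutation relations
  have hrel1 : x₁ * x₂ * x₁⁻¹ = c * x₂ := by rw [hcdef]; group
  have hrel2 : x₂ * x₁ * x₂⁻¹ = c⁻¹ * x₁ := by rw [hcdef]; group
  have hA : ∀ k : ℤ, x₁ ^ k * x₂ * (x₁ ^ k)⁻¹ = c ^ k * x₂ :=
    fun k => aux_conj_zpow hrel1 (hccX x₁ hx₁) k
  have hB : ∀ k : ℤ, x₂ ^ k * x₁ * (x₂ ^ k)⁻¹ = (c⁻¹) ^ k * x₁ :=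
    fun k => aux_conj_zpow hrel2 (hccX x₂ hx₂).inv_left k
  -- the conjugating data for t
  obtain ⟨ζ₁, hζ₁Z, h₁⟩ := hkey x₁ hx₁
  obtain ⟨ζ₂, hζ₂Z, h₂⟩ := hkey x₂ hx₂
  obtain ⟨m₁, hm₁⟩ := hZgen ζ₁ hζ₁Z
  obtain ⟨m₂, hm₂⟩ := hZgen ζ₂ hζ₂Z
  set y : P := x₁ ^ m₂ * x₂ ^ (-m₁) with hydef
  have hyX : y ∈ X := X.mul_mem (X.zpow_mem hx₁ m₂) (X.zpow_mem hx₂ (-m₁))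
  have hconj₁ : y * x₁ * y⁻¹ = ζ₁ * x₁ := by
    have e : y * x₁ * y⁻¹ = x₁ ^ m₂ * (x₂ ^ (-m₁) * x₁ * (x₂ ^ (-m₁))⁻¹) * (x₁ ^ m₂)⁻¹ := by
      rw [hydef]; group
    rw [e, hB (-m₁)]
    have hcc : (c⁻¹) ^ (-m₁) = c ^ m₁ := by
      rw [inv_zpow, ← zpow_neg, neg_neg]
    rw [hcc, ← hm₁]
    have hcomm1 : Commute (c ^ m₁) (x₁ ^ m₂) := ((hccX x₁ hx₁).zpow_left m₁).zpow_right m₂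
    calc x₁ ^ m₂ * (c ^ m₁ * x₁) * (x₁ ^ m₂)⁻¹
        = c ^ m₁ * (x₁ ^ m₂ * x₁ * (x₁ ^ m₂)⁻¹) := by
          simp only [← mul_assoc]
          rw [← hcomm1.eq]
      _ = c ^ m₁ * x₁ := by
          rw [show x₁ ^ m₂ * x₁ * (x₁ ^ m₂)⁻¹ = x₁ from by group]
  have hconj₂ : y * x₂ * y⁻¹ = ζ₂ * x₂ := by
    have e : y * x₂ * y⁻¹ = x₁ ^ m₂ * x₂ * (x₁ ^ m₂)⁻¹ := by
      rw [hydef]; group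
    rw [e, hA m₂, hm₂]
  -- generation of X
  have hgen : Subgroup.closure ({x₁, x₂} : Set P) = X := by
    set H := Subgroup.closure ({x₁, x₂} : Set P) with hHdef
    have hHX : H ≤ X := (Subgroup.closure_le X).mpr (by
      rintro g (rfl | rfl)
      exacts [hx₁, hx₂])
    have hx₁H : x₁ ∈ H := Subgroup.subset_closure (by left; rfl)
    have hx₂H : x₂ ∈ H := Subgroup.subset_closure (by right; rfl)
    have hd : Nat.card H ∣ p ^ 3 := hXcard ▸ Subgroup.card_dvd_of_le hHX
    obtain ⟨i, hi3, hHc⟩ := (Nat.dvd_prime_pow hp).mp hd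
    have hne : (⟨x₁, hx₁H⟩ : H) * ⟨x₂, hx₂H⟩ ≠ (⟨x₂, hx₂H⟩ : H) * ⟨x₁, hx₁H⟩ := by
      intro hcon
      have hP : x₁ * x₂ = x₂ * x₁ := congrArg Subtype.val hcon
      exact hab (Subtype.ext hP)
    have hsmall : ¬ i ≤ 2 := by
      intro hi
      have hcm : ∀ g1 g2 : H, g1 * g2 = g2 * g1 := by
        interval_cases i
        · intro g1 g2
          have : Subsingleton H := (Nat.card_eq_one_iff_unique.mp (by rw [hHc, pow_zero])).1
          exact Subsingleton.elim _ _
        · have : IsCyclic H := isCyclic_of_prime_card (p := p) (by rw [hHc, pow_one])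
          letI := IsCyclic.commGroup (α := H)
          exact fun g1 g2 => mul_comm g1 g2
        · exact IsPGroup.commutative_of_card_eq_prime_sq (p := p) hHc
      exact hne (hcm _ _)
    have hi2 : i = 3 := by omega
    exact Subgroup.eq_of_le_of_card_ge hHX (by rw [hXcard, hHc, hi2])
  refine ⟨y, hyX, ?_⟩
  intro x hx
  rw [← hgen] at hx
  refine Subgroup.closure_induction
    (p := fun g _ => t * g * t⁻¹ = y * g * y⁻¹) ?_ ?_ ?_ ?_ hx
  · rintro g (rfl | rfl)
    · exact h₁.trans hconj₁.symm
    · exact h₂.trans hconj₂.symm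
  · simp
  · intro g h hg hh ihg ihh
    calc t * (g * h) * t⁻¹ = (t * g * t⁻¹) * (t * h * t⁻¹) := by group
      _ = (y * g * y⁻¹) * (y * h * y⁻¹) := by rw [ihg, ihh]
      _ = y * (g * h) * y⁻¹ := by group
  · intro g hg ihg
    calc t * g⁻¹ * t⁻¹ = (t * g * t⁻¹)⁻¹ := by group
      _ = (y * g * y⁻¹)⁻¹ := by rw [ihg]
      _ = y * g⁻¹ * y⁻¹ := by group
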